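/- Let ω ≠ 0 and let y(t) := (cos(ωt), sin(ωt), 0)ᵀ ∈ S² be a unit direction rotating at constant angular speed ω in a fixed plane. Then the matrix-valued function t ↦ π_{y(t)} = I₃ − y(t) y(t)ᵀ is persistently exciting; in particular the persistent excitation condition holds with window length T = 2π/|ω|. -/

import Mathlib

open Matrix MeasureTheory Real

noncomputable section

lemma key_pos (ω : ℝ) (hω : 0 < ω) : ω * (2*π/|ω|) = 2*π := by
  rw [abs_of_pos hω]; field_simp

lemma key_neg (ω : ℝ) (hω : ω < 0) : ω * (2*π/|ω|) = -(2*π) := by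
  rw [abs_of_neg hω]; field_simp; linear_combination (-1) * (mul_inv_cancel₀ hω.ne)

lemma int_cos_sq (ω t : ℝ) (hω : ω ≠ 0) :
    ∫ τ in t..(t + 2*π/|ω|), Real.cos (ω*τ)^2 = π/|ω| := by
  rw [intervalIntegral.integral_comp_mul_left (fun x => Real.cos x ^ 2) hω, integral_cos_sq,
    mul_add]
  rcases hω.lt_or_gt with h | h
  · rw [key_neg ω h, ← sub_eq_add_neg, Real.cos_sub_two_pi, Real.sin_sub_two_pi, abs_of_neg h,
      smul_eq_mul]
    field_simp
    ring
  · rw [key_pos ω h, Real.cos_add_two_pi, Real.sin_add_two_pi, abs_of_pos h, smul_eq_mul]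
    field_simp
    ring

lemma int_sin_sq (ω t : ℝ) (hω : ω ≠ 0) :
    ∫ τ in t..(t + 2*π/|ω|), Real.sin (ω*τ)^2 = π/|ω| := by
  rw [intervalIntegral.integral_comp_mul_left (fun x => Real.sin x ^ 2) hω, integral_sin_sq,
    mul_add]
  rcases hω.lt_or_gt with h | h
  · rw [key_neg ω h, ← sub_eq_add_neg, Real.cos_sub_two_pi, Real.sin_sub_two_pi, abs_of_neg h,
      smul_eq_mul]
    field_simp
    ring
  · rw [key_pos ω h, Real.cos_add_two_pi, Real.sin_add_two_pi, abs_of_pos h, smul_eq_mul]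
    field_simp
    ring

lemma int_sin_cos (ω t : ℝ) (hω : ω ≠ 0) :
    ∫ τ in t..(t + 2*π/|ω|), Real.sin (ω*τ) * Real.cos (ω*τ) = 0 := by
  rw [intervalIntegral.integral_comp_mul_left (fun x => Real.sin x * Real.cos x) hω,
    integral_sin_mul_cos₁, mul_add]
  rcases hω.lt_or_gt with h | h
  · rw [key_neg ω h, ← sub_eq_add_neg, Real.sin_sub_two_pi]; simp
  · rw [key_pos ω h, Real.sin_add_two_pi]; simp

end

noncomputable section

/-- The projection operator `π_y := I₃ − y yᵀ` associated with a vector `y ∈ ℝ³`. -/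
def proj (y : Fin 3 → ℝ) : Matrix (Fin 3) (Fin 3) ℝ := 1 - vecMulVec y y

/-- Entrywise interval integral of a matrix-valued function of time. -/
def matInt (M : ℝ → Matrix (Fin 3) (Fin 3) ℝ) (a b : ℝ) : Matrix (Fin 3) (Fin 3) ℝ :=
  Matrix.of fun i j => ∫ τ in a..b, M τ i j

/-- A time-dependent `3×3` matrix `Σ(t)` is persistently exciting (PE) if there exist
`T > 0` and `0 < μ < T` such that `(1/T) ∫_t^{t+T} Σ(τ) dτ ≥ μ I₃` for all `t > 0`. -/
def IsPE (M : ℝ → Matrix (Fin 3) (Fin 3) ℝ) : Prop :=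
  ∃ T μ : ℝ, 0 < T ∧ 0 < μ ∧ μ < T ∧
    ∀ t > (0 : ℝ),
      (T⁻¹ • matInt M t (t + T) - μ • (1 : Matrix (Fin 3) (Fin 3) ℝ)).PosSemidef

lemma int_one_sub (f : ℝ → ℝ) (hf : Continuous f) (t T v : ℝ)
    (h : ∫ τ in t..(t+T), f τ = v) :
    ∫ τ in t..(t+T), (1 - f τ) = T - v := by
  rw [intervalIntegral.integral_sub intervalIntegrable_const (hf.intervalIntegrable _ _), h,
    intervalIntegral.integral_const]
  simp

lemma matEq (ω t : ℝ) (hω : ω ≠ 0) :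
    matInt (fun τ => proj ![Real.cos (ω * τ), Real.sin (ω * τ), 0]) t (t + 2 * π / |ω|) =
      Matrix.diagonal ![π/|ω|, π/|ω|, 2*π/|ω|] := by
  ext i j
  fin_cases i <;> fin_cases j <;>
    simp [matInt, proj, vecMulVec, Matrix.one_apply, Matrix.sub_apply]
  · have := int_one_sub (fun τ => Real.cos (ω*τ)^2) (by continuity) t (2*π/|ω|)
      (π/|ω|) (int_cos_sq ω t hω)
    simp only [sq] at this
    calc ∫ τ in t..(t + 2*π/|ω|), (1 - Real.cos (ω*τ) * Real.cos (ω*τ)) = 2*π/|ω| - π/|ω| := this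
    _ = π/|ω| := by ring
  · have := int_sin_cos ω t hω
    rw [show (∫ τ in t..(t + 2*π/|ω|), Real.cos (ω*τ) * Real.sin (ω*τ))
        = ∫ τ in t..(t + 2*π/|ω|), Real.sin (ω*τ) * Real.cos (ω*τ) by
      congr 1; ext τ; ring]
    simpa using this
  · have := int_sin_cos ω t hω
    simpa using this
  · have := int_one_sub (fun τ => Real.sin (ω*τ)^2) (by continuity) t (2*π/|ω|)
      (π/|ω|) (int_sin_sq ω t hω)
    simp only [sq] at this
    calc ∫ τ in t..(t + 2*π/|ω|), (1 - Real.sin (ω*τ) * Real.sin (ω*τ)) = 2*π/|ω| - π/|ω| := this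
    _ = π/|ω| := by ring

/-- For `ω ≠ 0` and the rotating unit direction `y(t) = (cos ωt, sin ωt, 0)ᵀ`, the function
`t ↦ π_{y(t)}` is persistently exciting; in particular the PE condition holds with window
length `T = 2π/|ω|`. -/
theorem stmt7 (ω : ℝ) (hω : ω ≠ 0) :
    IsPE (fun t => proj ![Real.cos (ω * t), Real.sin (ω * t), 0]) ∧
    ∃ μ : ℝ, 0 < μ ∧ μ < 2 * π / |ω| ∧
      ∀ t > (0 : ℝ),
        ((2 * π / |ω|)⁻¹ •
            matInt (fun τ => proj ![Real.cos (ω * τ), Real.sin (ω * τ), 0]) t (t + 2 * π / |ω|)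
          - μ • (1 : Matrix (Fin 3) (Fin 3) ℝ)).PosSemidef := by
  have hπ : (0:ℝ) < π := Real.pi_pos
  have ha : (0:ℝ) < |ω| := abs_pos.mpr hω
  have hT : (0:ℝ) < 2 * π / |ω| := by positivity
  set μ : ℝ := min (1/2 : ℝ) (π/|ω|) with hμdef
  have hμ0 : 0 < μ := lt_min (by norm_num) (by positivity)
  have hμhalf : μ ≤ 1/2 := min_le_left _ _
  have hμT : μ < 2 * π / |ω| := by
    calc μ ≤ π/|ω| := min_le_right _ _
    _ < 2 * π / |ω| := by
      rw [div_lt_div_iff₀ ha ha]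
      nlinarith
  have hhalf : (2 * π / |ω|)⁻¹ * (π/|ω|) = 1/2 := by
    field_simp
  have hone : (2 * π / |ω|)⁻¹ * (2*π/|ω|) = 1 := inv_mul_cancel₀ hT.ne'
  have main : ∀ t > (0:ℝ),
      ((2 * π / |ω|)⁻¹ •
          matInt (fun τ => proj ![Real.cos (ω * τ), Real.sin (ω * τ), 0]) t (t + 2 * π / |ω|)
        - μ • (1 : Matrix (Fin 3) (Fin 3) ℝ)).PosSemidef := by
    intro t ht
    rw [matEq ω t hω]
    have hmat : (2 * π / |ω|)⁻¹ • Matrix.diagonal ![π/|ω|, π/|ω|, 2*π/|ω|]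
        - μ • (1 : Matrix (Fin 3) (Fin 3) ℝ)
        = Matrix.diagonal ![1/2 - μ, 1/2 - μ, 1 - μ] := by
      ext i j
      fin_cases i <;> fin_cases j <;>
        simp [Matrix.one_apply, hhalf, hone] <;>
        (try field_simp) <;> (try ring)
    rw [hmat]
    refine Matrix.posSemidef_diagonal_iff.mpr fun i => ?_
    fin_cases i <;> simp <;> linarith
  exact ⟨⟨2 * π / |ω|, μ, hT, hμ0, hμT, main⟩, μ, hμ0, hμT, main⟩
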